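/- Every regular language L over a finite alphabet Σ can be decomposed into a finite union of regular languages of the form σ_{n+1}·L_n*·σ_n⋯L_1*·σ_1: there exist k ∈ ℕ and, for each j ∈ {1,…,k}, an integer n_j ≥ 0, words σ^j_1,…,σ^j_{n_j+1} ∈ Σ* and regular languages L^j_1,…,L^j_{n_j} ⊆ Σ*, such that L = ⋃_{j=1}^k σ^j_{n_j+1}·(L^j_{n_j})*·σ^j_{n_j}⋯(L^j_1)*·σ^j_1, where each summand is the concatenation, read left to right, of the singleton language {σ^j_{n_j+1}}, the Kleene star of L^j_{n_j}, {σ^j_{n_j}}, …, the Kleene star of L^j_1, and {σ^j_1}. -/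

import Mathlib

/-- The alphabet `Σ_{r^m}` of digit vectors. -/
abbrev Alpha (r m : ℕ) := Fin m → Fin r
abbrev Word (r m : ℕ) := List (Alpha r m)

/-- `ρ(b₁⋯bₙ) = Σᵢ r^(i-1)·bᵢ` (least significant digit first), viewed in `ℝ^m`. -/
noncomputable def rho (r m : ℕ) : Word r m → (Fin m → ℝ)
  | [] => 0
  | b :: w => (fun j => (b j : ℝ)) + (r : ℝ) • rho r m w

/-- `Γ_σ(x) = r^|σ|·x + ρ(σ)`. -/
noncomputable def Gam (r m : ℕ) (σ : Word r m) (x : Fin m → ℝ) : Fin m → ℝ :=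
  (r : ℝ) ^ σ.length • x + rho r m σ

/-- The inverse bijection `Γ_σ⁻¹(y) = (y - ρ(σ))/r^|σ|`. -/
noncomputable def GamInv (r m : ℕ) (σ : Word r m) (y : Fin m → ℝ) : Fin m → ℝ :=
  ((r : ℝ) ^ σ.length)⁻¹ • (y - rho r m σ)

/-- `ξ(σ) = ρ(σ)/(1 - r^|σ|)` (meaningful for nonempty `σ`). -/
noncomputable def xi (r m : ℕ) (σ : Word r m) : Fin m → ℝ :=
  (1 - (r : ℝ) ^ σ.length)⁻¹ • rho r m σ

/-- `ρ(L) = {ρ(σ) : σ ∈ L}`. -/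
def rhoSet (r m : ℕ) (L : Set (Word r m)) : Set (Fin m → ℝ) :=
  {x | ∃ σ ∈ L, x = rho r m σ}

/-- `ξ(L) = {ξ(σ) : σ ∈ L, σ ≠ ε}`. -/
def xiSet (r m : ℕ) (L : Set (Word r m)) : Set (Fin m → ℝ) :=
  {x | ∃ σ ∈ L, σ ≠ [] ∧ x = xi r m σ}

/-- Kleene star of a language. -/
def kstar' {α : Type*} (L : Set (List α)) : Set (List α) :=
  {w | ∃ ws : List (List α), (∀ u ∈ ws, u ∈ L) ∧ w = ws.flatten}

/-- Concatenation of two languages. -/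
def catL {α : Type*} (A B : Set (List α)) : Set (List α) :=
  {w | ∃ a ∈ A, ∃ b ∈ B, w = a ++ b}

/-- `chainLang σ Ls n = σ_{n+1}·(L_n)*·σ_n ⋯ (L_1)*·σ_1`. -/
def chainLang {α : Type*} (σ : ℕ → List α) (Ls : ℕ → Set (List α)) : ℕ → Set (List α)
  | 0 => {σ 1}
  | n + 1 => catL {σ (n + 2)} (catL (kstar' (Ls (n + 1))) (chainLang σ Ls n))

/-- `catDown σ hi lo = σ_hi·σ_{hi-1}⋯σ_lo` (empty if `lo > hi`). -/
def catDown {α : Type*} (σ : ℕ → List α) (hi lo : ℕ) : List α :=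
  ((List.range (hi + 1 - lo)).map fun j => σ (hi - j)).flatten

/-- `catUp σ k = σ_1·σ_2⋯σ_k`. -/
def catUp {α : Type*} (σ : ℕ → List α) (k : ℕ) : List α :=
  ((List.range k).map fun j => σ (j + 1)).flatten

/-- `σ^k`, the `k`-fold concatenation of `σ`. -/
def repK {α : Type*} (σ : List α) (k : ℕ) : List α := (List.replicate k σ).flatten

/-- `ℝ₋·X = {t·x : t ≤ 0, x ∈ X}`. -/
def negSmul {m : ℕ} (X : Set (Fin m → ℝ)) : Set (Fin m → ℝ) :=
  {y | ∃ t : ℝ, t ≤ 0 ∧ ∃ x ∈ X, y = t • x}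

/-- The cone `C(R)` generated by a finite set of rays. -/
def coneOf {m : ℕ} (R : Finset ((Fin m → ℝ) × ℝ)) : Set ((Fin m → ℝ) × ℝ) :=
  {y | ∃ t : ((Fin m → ℝ) × ℝ) → ℝ, (∀ p, 0 ≤ t p) ∧ y = ∑ p ∈ R, t p • p}

/-- The polyhedral convex set `P(R) = {x : (x,1) ∈ C(R)}`. -/
def polyOf {m : ℕ} (R : Finset ((Fin m → ℝ) × ℝ)) : Set (Fin m → ℝ) :=
  {x | (x, (1 : ℝ)) ∈ coneOf R}

namespace ChainAux

variable {α : Type*}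

theorem catL_assoc (A B C : Set (List α)) : catL (catL A B) C = catL A (catL B C) := by
  ext w
  constructor
  · rintro ⟨x, ⟨a, ha, b, hb, rfl⟩, c, hc, rfl⟩
    exact ⟨a, ha, b ++ c, ⟨b, hb, c, hc, rfl⟩, by simp⟩
  · rintro ⟨a, ha, x, ⟨b, hb, c, hc, rfl⟩, rfl⟩
    exact ⟨a ++ b, ⟨a, ha, b, hb, rfl⟩, c, hc, by simp⟩

theorem catL_singleton (u v : List α) : catL {u} ({v} : Set (List α)) = {u ++ v} := by
  ext w; simp [catL]

theorem catL_singleton_left (u v : List α) (X : Set (List α)) :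
    catL {u} (catL {v} X) = catL {u ++ v} X := by
  rw [← catL_assoc, catL_singleton]

theorem catL_nil_left (X : Set (List α)) : catL {([] : List α)} X = X := by
  ext w; simp [catL]

theorem catL_nil_right (X : Set (List α)) : catL X {([] : List α)} = X := by
  ext w; simp [catL]

theorem chainLang_congr {σ τ : ℕ → List α} {Ls Ms : ℕ → Set (List α)} (n : ℕ)
    (hσ : ∀ i ≤ n + 1, σ i = τ i) (hL : ∀ i ≤ n, Ls i = Ms i) :
    chainLang σ Ls n = chainLang τ Ms n := by
  induction n with
  | zero => simp [chainLang, hσ 1 (by omega)]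
  | succ n ih =>
    simp only [chainLang]
    rw [hσ (n+2) le_rfl, hL (n+1) le_rfl,
      ih (fun i hi => hσ i (by omega)) (fun i hi => hL i (by omega))]

theorem catL_singleton_chainLang (u : List α) (τ : ℕ → List α) (Ms : ℕ → Set (List α)) (m : ℕ) :
    catL {u} (chainLang τ Ms m)
      = chainLang (fun i => if i = m + 1 then u ++ τ (m+1) else τ i) Ms m := by
  cases m with
  | zero => simp [chainLang, catL_singleton]
  | succ m =>
    show catL {u} (catL {τ (m+2)} _) = _
    rw [catL_singleton_left]
    simp only [chainLang]
    rw [chainLang_congr m (σ := fun i => if i = m + 2 then u ++ τ (m+2) else τ i) (τ := τ)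
      (fun i hi => by simp [show i ≠ m + 2 by omega]) (fun i hi => rfl)]
    norm_num

theorem catL_chainLang_chainLang (σ τ : ℕ → List α) (Ls Ms : ℕ → Set (List α)) (m : ℕ) :
    ∀ n, catL (chainLang σ Ls n) (chainLang τ Ms m)
      = chainLang
          (fun i => if i ≤ m then τ i else if i = m + 1 then σ 1 ++ τ (m+1) else σ (i - m))
          (fun i => if i ≤ m then Ms i else Ls (i - m)) (m + n) := by
  intro n
  induction n with
  | zero =>
    show catL {σ 1} _ = _
    rw [catL_singleton_chainLang]
    refine chainLang_congr m ?_ ?_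
    · intro i hi
      rcases Nat.lt_or_ge i (m+1) with h | h
      · simp [show i ≠ m + 1 by omega, show i ≤ m by omega]
      · have : i = m + 1 := by omega
        simp [this]
    · intro i hi; simp [hi]
  | succ n ih =>
    show catL (catL {σ (n+2)} (catL (kstar' (Ls (n+1))) (chainLang σ Ls n))) _ = _
    rw [catL_assoc, catL_assoc, ih]
    show _ = catL {(fun i => if i ≤ m then τ i else if i = m + 1 then σ 1 ++ τ (m+1) else σ (i - m)) (m + n + 2)}
      (catL (kstar' ((fun i => if i ≤ m then Ms i else Ls (i - m)) (m + n + 1))) (chainLang _ _ (m + n)))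
    have h1 : (if m + n + 2 ≤ m then τ (m+n+2) else if m + n + 2 = m + 1 then σ 1 ++ τ (m+1) else σ (m+n+2 - m)) = σ (n + 2) := by
      rw [if_neg (by omega), if_neg (by omega), show m+n+2-m = n+2 from by omega]
    have h2 : (if m + n + 1 ≤ m then Ms (m+n+1) else Ls (m+n+1 - m)) = Ls (n + 1) := by
      rw [if_neg (by omega), show m+n+1-m = n+1 from by omega]
    simp only [h1, h2]

structure RChain (α : Type*) where
  n : ℕ
  σ : ℕ → List α
  Ls : ℕ → Set (List α)
  reg : ∀ i ∈ Finset.Icc 1 n, Language.IsRegular (Ls i)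

def RChain.lang (c : RChain α) : Set (List α) := chainLang c.σ c.Ls c.n

def Good (L : Set (List α)) : Prop :=
  ∃ cs : List (RChain α), L = {w | ∃ c ∈ cs, w ∈ c.lang}

theorem good_empty : Good (∅ : Set (List α)) := ⟨[], by simp⟩

theorem good_singleton (u : List α) : Good ({u} : Set (List α)) :=
  ⟨[⟨0, fun _ => u, fun _ => ∅, by simp⟩], by
    ext w; simp [RChain.lang, chainLang]⟩

theorem good_union {A B : Set (List α)} (hA : Good A) (hB : Good B) : Good (A ∪ B) := by
  obtain ⟨cs, rfl⟩ := hA; obtain ⟨ds, rfl⟩ := hB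
  refine ⟨cs ++ ds, ?_⟩
  ext w
  simp only [Set.mem_union, Set.mem_setOf_eq, List.mem_append]
  constructor
  · rintro (⟨c, hc, hw⟩ | ⟨c, hc, hw⟩)
    · exact ⟨c, Or.inl hc, hw⟩
    · exact ⟨c, Or.inr hc, hw⟩
  · rintro ⟨c, hc | hc, hw⟩
    · exact Or.inl ⟨c, hc, hw⟩
    · exact Or.inr ⟨c, hc, hw⟩

theorem good_kstar {K : Set (List α)} (hK : Language.IsRegular K) : Good (kstar' K) := by
  refine ⟨[⟨1, fun _ => [], fun _ => K, ?_⟩], ?_⟩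
  · intro i hi
    simp only [Finset.Icc_self, Finset.mem_singleton] at hi
    exact hK
  · have : chainLang (fun _ => ([] : List α)) (fun _ => K) 1 = kstar' K := by
      show catL {([] : List α)} (catL (kstar' K) {([] : List α)}) = kstar' K
      rw [catL_nil_left, catL_nil_right]
    ext w
    simp [RChain.lang, this]

def RChain.comp (c d : RChain α) : RChain α where
  n := d.n + c.n
  σ := fun i => if i ≤ d.n then d.σ i else if i = d.n + 1 then c.σ 1 ++ d.σ (d.n+1) else c.σ (i - d.n)
  Ls := fun i => if i ≤ d.n then d.Ls i else c.Ls (i - d.n)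
  reg := by
    intro i hi
    simp only [Finset.mem_Icc] at hi
    by_cases h : i ≤ d.n
    · simpa [h] using d.reg i (by simp only [Finset.mem_Icc]; omega)
    · simpa [h] using c.reg (i - d.n) (by simp only [Finset.mem_Icc]; omega)

theorem RChain.lang_comp (c d : RChain α) : (c.comp d).lang = catL c.lang d.lang :=
  (catL_chainLang_chainLang c.σ d.σ c.Ls d.Ls d.n c.n).symm

theorem good_catL {A B : Set (List α)} (hA : Good A) (hB : Good B) : Good (catL A B) := by
  obtain ⟨cs, rfl⟩ := hA; obtain ⟨ds, rfl⟩ := hB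
  refine ⟨cs.flatMap (fun c => ds.map fun d => c.comp d), ?_⟩
  ext w
  constructor
  · rintro ⟨a, ⟨c, hc, ha⟩, b, ⟨d, hd, hb⟩, rfl⟩
    refine ⟨c.comp d, ?_, ?_⟩
    · simp only [List.mem_flatMap, List.mem_map]
      exact ⟨c, hc, d, hd, rfl⟩
    · rw [RChain.lang_comp]
      exact ⟨a, ha, b, hb, rfl⟩
  · rintro ⟨e, he, hw⟩
    simp only [List.mem_flatMap, List.mem_map] at he
    obtain ⟨c, hc, d, hd, rfl⟩ := he
    rw [RChain.lang_comp] at hw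
    obtain ⟨a, ha, b, hb, rfl⟩ := hw
    exact ⟨a, ⟨c, hc, ha⟩, b, ⟨d, hd, hb⟩, rfl⟩

theorem good_finite {X : Set (List α)} (h : X.Finite) : Good X := by
  refine Set.Finite.induction_on (motive := fun s _ => Good s) _ h good_empty ?_
  intro a s _ _ ih
  rw [Set.insert_eq]
  exact good_union (good_singleton _) ih

theorem good_biUnion {β : Type*} [DecidableEq β] (t : Finset β) (f : β → Set (List α)) :
    (∀ q ∈ t, Good (f q)) → Good (⋃ q ∈ t, f q) := by
  induction t using Finset.induction_on with
  | empty => intro _; simpa using good_empty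
  | @insert a s ha ih =>
    intro hf
    rw [Finset.set_biUnion_insert]
    exact good_union (hf a (by simp)) (ih fun q hq => hf q (by simp [hq]))

section DFAPart

variable {Q : Type*} (M : DFA α Q)

/-- Words taking `p` to `q` with all intermediate states in `S`. -/
def path (S : Set Q) (p q : Q) : Set (List α) :=
  {w | M.evalFrom p w = q ∧
    ∀ v, v <+: w → v ≠ [] → v.length < w.length → M.evalFrom p v ∈ S}

theorem path_mono {S S' : Set Q} (h : S ⊆ S') (p q : Q) : path M S p q ⊆ path M S' p q :=
  fun w hw => ⟨hw.1, fun v h1 h2 h3 => h (hw.2 v h1 h2 h3)⟩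

theorem nil_mem_path (S : Set Q) (s : Q) : ([] : List α) ∈ path M S s s := by
  refine ⟨rfl, ?_⟩
  intro v hv hne _
  exact absurd (List.prefix_nil.mp hv) hne

theorem path_append {S : Set Q} {s p q : Q} {u v : List α}
    (hu : u ∈ path M S p s) (hv : v ∈ path M (insert s S) s q) :
    u ++ v ∈ path M (insert s S) p q := by
  obtain ⟨hu1, hu2⟩ := hu
  obtain ⟨hv1, hv2⟩ := hv
  refine ⟨by rw [DFA.evalFrom_of_append, hu1, hv1], ?_⟩
  intro x hx hxne hxlt
  rcases lt_trichotomy x.length u.length with h | h | h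
  · exact Set.mem_insert_iff.2 (Or.inr
      (hu2 x (List.prefix_of_prefix_length_le hx (List.prefix_append u v) h.le) hxne h))
  · have hxu : x = u :=
      (List.prefix_of_prefix_length_le hx (List.prefix_append u v) h.le).eq_of_length h
    subst hxu
    rw [hu1]
    exact Set.mem_insert s S
  · have hux : u <+: x := List.prefix_of_prefix_length_le (List.prefix_append u v) hx h.le
    obtain ⟨y, rfl⟩ := hux
    have hyv : y <+: v := (List.prefix_append_right_inj u).1 hx
    have hyne : y ≠ [] := by rintro rfl; simp at h
    have hylt : y.length < v.length := by
      simp only [List.length_append] at hxlt; omega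
    rw [DFA.evalFrom_of_append, hu1]
    exact hv2 y hyv hyne hylt

theorem path_flatten_append {S : Set Q} {s q : Q} {v : List α} (ws : List (List α))
    (hws : ∀ u ∈ ws, u ∈ path M S s s) (hv : v ∈ path M (insert s S) s q) :
    ws.flatten ++ v ∈ path M (insert s S) s q := by
  induction ws with
  | nil => simpa
  | cons u ws ih =>
    rw [List.flatten_cons, List.append_assoc]
    exact path_append M (hws u (by simp)) (ih fun u' h => hws u' (by simp [h]))

theorem path_split {S : Set Q} {s p q : Q} {w : List α}
    (hw : w ∈ path M (insert s S) p q)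
    (hbad : ¬ ∀ x, x <+: w → x ≠ [] → x.length < w.length → M.evalFrom p x ∈ S) :
    ∃ x v, w = x ++ v ∧ x ≠ [] ∧ x ∈ path M S p s ∧ v ∈ path M (insert s S) s q := by
  classical
  push_neg at hbad
  have hP : ∃ k, ∃ x : List α, x <+: w ∧ x ≠ [] ∧ x.length < w.length ∧
      M.evalFrom p x ∉ S ∧ x.length = k := by
    obtain ⟨x, h1, h2, h3, h4⟩ := hbad
    exact ⟨x.length, x, h1, h2, h3, h4, rfl⟩
  obtain ⟨x, hx1, hx2, hx3, hx4, hx5⟩ := Nat.find_spec hP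
  have hmin := fun k (hk : k < Nat.find hP) => Nat.find_min hP hk
  have hxs : M.evalFrom p x = s := by
    have := hw.2 x hx1 hx2 hx3
    rcases Set.mem_insert_iff.1 this with h | h
    · exact h
    · exact absurd h hx4
  have hxpath : x ∈ path M S p s := by
    refine ⟨hxs, ?_⟩
    intro y hy hyne hylt
    by_contra hyS
    exact hmin y.length (by omega) ⟨y, hy.trans hx1, hyne, by omega, hyS, rfl⟩
  obtain ⟨v, rfl⟩ := hx1
  refine ⟨x, v, rfl, hx2, hxpath, ?_, ?_⟩
  · rw [← hxs, ← DFA.evalFrom_of_append]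
    exact hw.1
  · intro y hy hyne hylt
    have h1 : x ++ y <+: x ++ v := (List.prefix_append_right_inj x).2 hy
    have h2 : x ++ y ≠ [] := by simp [hx2]
    have h3 : (x ++ y).length < (x ++ v).length := by
      simp only [List.length_append]; omega
    have := hw.2 (x ++ y) h1 h2 h3
    rwa [DFA.evalFrom_of_append, hxs] at this

theorem path_insert_aux {S : Set Q} {s q : Q} :
    ∀ N (w : List α), w.length ≤ N → w ∈ path M (insert s S) s q →
      w ∈ catL (kstar' (path M S s s)) (path M S s q) := by
  intro N
  induction N with
  | zero =>
    intro w hlen hw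
    have : w = [] := List.length_eq_zero_iff.mp (by omega)
    subst this
    refine ⟨[], ⟨[], by simp, rfl⟩, [], ⟨hw.1, ?_⟩, by simp⟩
    intro v hv hne _
    exact absurd (List.prefix_nil.mp hv) hne
  | succ N ih =>
    intro w hlen hw
    by_cases h : ∀ x, x <+: w → x ≠ [] → x.length < w.length → M.evalFrom s x ∈ S
    · exact ⟨[], ⟨[], by simp, rfl⟩, w, ⟨hw.1, h⟩, by simp⟩
    · obtain ⟨x, v, rfl, hxne, hxp, hvp⟩ := path_split M hw h
      have hvlen : v.length ≤ N := by
        have : 1 ≤ x.length := List.length_pos_iff.mpr hxne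
        simp only [List.length_append] at hlen
        omega
      obtain ⟨fl, ⟨ws, hws, rfl⟩, v', hv', hveq⟩ := ih v hvlen hvp
      refine ⟨(x :: ws).flatten, ⟨x :: ws, ?_, rfl⟩, v', hv', ?_⟩
      · intro u hu
        rcases List.mem_cons.1 hu with rfl | hu
        · exact hxp
        · exact hws u hu
      · rw [List.flatten_cons, List.append_assoc, ← hveq]

theorem path_insert (S : Set Q) (s p q : Q) :
    path M (insert s S) p q =
      path M S p q ∪
        catL (path M S p s) (catL (kstar' (path M S s s)) (path M S s q)) := by
  ext w
  constructor
  · intro hw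
    by_cases h : ∀ x, x <+: w → x ≠ [] → x.length < w.length → M.evalFrom p x ∈ S
    · exact Or.inl ⟨hw.1, h⟩
    · obtain ⟨x, v, rfl, hxne, hxp, hvp⟩ := path_split M hw h
      exact Or.inr ⟨x, hxp, v, path_insert_aux M v.length v le_rfl hvp, rfl⟩
  · rintro (hw | ⟨u, hu, z, ⟨fl, ⟨ws, hws, rfl⟩, v, hv, rfl⟩, rfl⟩)
    · exact path_mono M (Set.subset_insert s S) p q hw
    · exact path_append M hu
        (path_flatten_append M ws hws (path_mono M (Set.subset_insert s S) s q hv))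

open Classical in
/-- A DFA recognizing `path M S p q`. -/
noncomputable def pathDFA (S : Set Q) (p q : Q) : DFA α (Option (Bool × Q)) where
  step := fun st a => match st with
    | none => none
    | some (false, x) => some (true, M.step x a)
    | some (true, x) => if x ∈ S then some (true, M.step x a) else none
  start := some (false, p)
  accept := {st | ∃ b, st = some (b, q)}

theorem pathDFA_step_none (S : Set Q) (p q : Q) (a : α) :
    (pathDFA M S p q).step none a = none := rfl

theorem pathDFA_step_false (S : Set Q) (p q : Q) (x : Q) (a : α) :
    (pathDFA M S p q).step (some (false, x)) a = some (true, M.step x a) := rfl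

open Classical in
theorem pathDFA_step_true (S : Set Q) (p q : Q) (x : Q) (a : α) :
    (pathDFA M S p q).step (some (true, x)) a
      = if x ∈ S then some (true, M.step x a) else none := rfl

open Classical in
theorem pathDFA_eval (S : Set Q) (p q : Q) : ∀ (w : List α),
    (pathDFA M S p q).eval w =
      if w = [] then some (false, p)
      else if ∀ x, x <+: w → x ≠ [] → x.length < w.length → M.evalFrom p x ∈ S
        then some (true, M.evalFrom p w) else none := by
  intro w
  induction w using List.reverseRecOn with
  | nil => simp [DFA.eval, pathDFA]
  | append_singleton w a ih =>
    have hstep : (pathDFA M S p q).eval (w ++ [a])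
        = (pathDFA M S p q).step ((pathDFA M S p q).eval w) a := by
      simp [DFA.eval]
    rcases eq_or_ne w [] with rfl | hw
    · have h1 : ¬(([] : List α) ++ [a] = []) := by simp
      have h2 : ∀ x : List α, x <+: [] ++ [a] → x ≠ [] → x.length < ([] ++ [a]).length →
          M.evalFrom p x ∈ S := by
        intro x hx hxne hxlt
        have hle := hx.length_le
        simp only [List.nil_append, List.length_singleton] at hxlt hle
        exact absurd (List.length_eq_zero_iff.mp (by omega)) hxne
      rw [hstep, ih, if_pos (rfl : ([] : List α) = []), if_neg h1, if_pos h2,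
        pathDFA_step_false]
      rfl
    · have hne : ¬(w ++ [a] = ([] : List α)) := by simp
      have hcond : (∀ x, x <+: w ++ [a] → x ≠ [] → x.length < (w ++ [a]).length →
          M.evalFrom p x ∈ S)
          ↔ ((∀ x, x <+: w → x ≠ [] → x.length < w.length → M.evalFrom p x ∈ S)
              ∧ M.evalFrom p w ∈ S) := by
        constructor
        · intro h
          refine ⟨fun x hx hne' hlt => h x (hx.trans (List.prefix_append w [a])) hne'
            (by simp only [List.length_append, List.length_singleton]; omega), ?_⟩
          exact h w (List.prefix_append w [a]) hw
            (by simp only [List.length_append, List.length_singleton]; omega)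
        · rintro ⟨h1, h2⟩ x hx hne' hlt
          have hxw : x <+: w := List.prefix_of_prefix_length_le hx
            (List.prefix_append w [a])
            (by simp only [List.length_append, List.length_singleton] at hlt; omega)
          rcases eq_or_lt_of_le hxw.length_le with he | hl
          · rw [hxw.eq_of_length he]; exact h2
          · exact h1 x hxw hne' hl
      rw [hstep, ih, if_neg hw, if_neg hne]
      by_cases hc : ∀ x, x <+: w → x ≠ [] → x.length < w.length → M.evalFrom p x ∈ S
      · rw [if_pos hc, pathDFA_step_true]
        by_cases hS : M.evalFrom p w ∈ S
        · rw [if_pos hS, if_pos (hcond.mpr ⟨hc, hS⟩), DFA.evalFrom_append_singleton]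
        · rw [if_neg hS, if_neg (fun h => hS (hcond.mp h).2)]
      · rw [if_neg hc, pathDFA_step_none, if_neg (fun h => hc (hcond.mp h).1)]

open Classical in
theorem pathDFA_accepts (S : Set Q) (p q : Q) :
    (pathDFA M S p q).accepts = path M S p q := by
  ext w
  rw [DFA.mem_accepts, pathDFA_eval]
  split_ifs with h1 h2
  · subst h1
    simp only [pathDFA, Set.mem_setOf_eq, Option.some.injEq, Prod.mk.injEq]
    constructor
    · rintro ⟨b, _, hq⟩
      exact ⟨hq, fun v hv hne _ => absurd (List.prefix_nil.mp hv) hne⟩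
    · rintro ⟨hq, _⟩
      exact ⟨false, rfl, hq⟩
  · simp only [pathDFA, Set.mem_setOf_eq, Option.some.injEq, Prod.mk.injEq]
    constructor
    · rintro ⟨b, _, hq⟩
      exact ⟨hq, h2⟩
    · rintro ⟨hq, _⟩
      exact ⟨true, rfl, hq⟩
  · simp only [pathDFA, Set.mem_setOf_eq]
    constructor
    · rintro ⟨b, hb⟩
      simp at hb
    · rintro ⟨_, hcnd⟩
      exact absurd hcnd h2

theorem path_isRegular {Q : Type} [Fintype Q] (M : DFA α Q) (S : Set Q) (p q : Q) :
    Language.IsRegular (path M S p q : Set (List α)) :=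
  ⟨Option (Bool × Q), inferInstance, pathDFA M S p q, pathDFA_accepts M S p q⟩

theorem good_path [Finite α] {Q : Type} [Fintype Q] (M : DFA α Q)
    (S : Finset Q) (p q : Q) : Good (path M (↑S : Set Q) p q) := by
  classical
  induction S using Finset.induction_on generalizing p q with
  | empty =>
    apply good_finite
    apply Set.Finite.subset (List.finite_length_le α 1)
    intro w hw
    simp only [Set.mem_setOf_eq]
    by_contra h
    push_neg at h
    have h1 : w.take 1 <+: w := List.take_prefix 1 w
    have h2 : (w.take 1).length = 1 := by
      rw [List.length_take]; omega
    have := hw.2 (w.take 1) h1 (by intro hnil; rw [hnil] at h2; simp at h2) (by omega)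
    simpa using this
  | @insert s S hs ih =>
    rw [Finset.coe_insert, path_insert]
    exact good_union (ih p q)
      (good_catL (ih p s)
        (good_catL (good_kstar (path_isRegular M (↑S) s s)) (ih s q)))

end DFAPart

theorem good_accepts [Finite α] {Q : Type} [Fintype Q] (M : DFA α Q) :
    Good (M.accepts : Set (List α)) := by
  classical
  have h1 : (M.accepts : Set (List α)) = ⋃ q ∈ (Finset.univ : Finset Q),
      (if q ∈ M.accept then path M (↑(Finset.univ : Finset Q)) M.start q else ∅) := by
    ext w
    constructor
    · intro hw
      refine Set.mem_iUnion₂.mpr ⟨M.eval w, Finset.mem_univ _, ?_⟩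
      have hacc : M.eval w ∈ M.accept := by rwa [DFA.mem_accepts] at hw
      rw [if_pos hacc]
      exact ⟨rfl, fun v _ _ _ => by simp⟩
    · intro hmem
      obtain ⟨q, -, hq⟩ := Set.mem_iUnion₂.mp hmem
      by_cases h : q ∈ M.accept
      · rw [if_pos h] at hq
        rw [DFA.mem_accepts]
        rw [show M.eval w = q from hq.1]
        exact h
      · rw [if_neg h] at hq
        exact absurd hq (Set.notMem_empty w)
  rw [h1]
  apply good_biUnion
  intro q _
  split_ifs
  · exact good_path M Finset.univ M.start q
  · exact good_empty

theorem good_to_statement {L : Set (List α)} (h : Good L) :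
    ∃ (k : ℕ) (n : Fin k → ℕ) (σ : Fin k → ℕ → List α)
      (Ls : Fin k → ℕ → Set (List α)),
      (∀ j : Fin k, ∀ i ∈ Finset.Icc 1 (n j), Language.IsRegular (Ls j i)) ∧
      L = ⋃ j : Fin k, chainLang (σ j) (Ls j) (n j) := by
  obtain ⟨cs, rfl⟩ := h
  refine ⟨cs.length, fun j => (cs.get j).n, fun j => (cs.get j).σ, fun j => (cs.get j).Ls,
    fun j => (cs.get j).reg, ?_⟩
  ext w
  simp only [Set.mem_iUnion, Set.mem_setOf_eq]
  constructor
  · rintro ⟨c, hc, hw⟩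
    obtain ⟨j, rfl⟩ := List.mem_iff_get.mp hc
    exact ⟨j, hw⟩
  · rintro ⟨j, hw⟩
    exact ⟨cs.get j, List.get_mem cs j, hw⟩

end ChainAux

/-- every regular language is a finite union of languages of the form
`σ_{n+1}·(L_n)*·σ_n ⋯ (L_1)*·σ_1` with each `L_i` regular. -/
theorem regular_eq_finite_union_chainLang
    {α : Type} [Fintype α] (L : Set (List α)) (hL : Language.IsRegular L) :
    ∃ (k : ℕ) (n : Fin k → ℕ) (σ : Fin k → ℕ → List α)
      (Ls : Fin k → ℕ → Set (List α)),
      (∀ j : Fin k, ∀ i ∈ Finset.Icc 1 (n j), Language.IsRegular (Ls j i)) ∧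
      L = ⋃ j : Fin k, chainLang (σ j) (Ls j) (n j) := by
  obtain ⟨Q, hQ, M, hM⟩ := hL
  haveI := hQ
  have hg : ChainAux.Good L := by
    rw [← hM]
    exact ChainAux.good_accepts M
  exact ChainAux.good_to_statement hg
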